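/- arXiv:2309.00487 — 2 statements merged into one kernel-verified Lean document; each statement's English description precedes it below -/
import Mathlib

section
/- Define s(n) = Σ_{i=0}^{n−1} Σ_{j=0}^{n−1} Δ(n)_i^j, where Δ(n)_i^j are the (n−1)×(n−1) minors of the binomial matrix M(n). Then s(n) = s(n−1) + 4^{n−1} for all n ≥ 2. -/
open Matrix Finset

/-- The binomial matrix with entry `(u+v).choose u`. -/
def M (n : ℕ) : Matrix (Fin n) (Fin n) ℤ :=
  Matrix.of fun u v => (((u : ℕ) + (v : ℕ)).choose (u : ℕ) : ℤ)

/-- Lower-triangular Pascal matrix. -/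
def Lm (n : ℕ) : Matrix (Fin n) (Fin n) ℤ :=
  Matrix.of fun u k => ((u : ℕ).choose (k : ℕ) : ℤ)

/-- Signed inverse of the Pascal matrix. -/
def Km (n : ℕ) : Matrix (Fin n) (Fin n) ℤ :=
  Matrix.of fun k v => (-1) ^ ((k : ℕ) + (v : ℕ)) * ((k : ℕ).choose (v : ℕ) : ℤ)

lemma vdm (u v n : ℕ) (hu : u < n) :
    ∑ k ∈ range n, u.choose k * v.choose k = (u + v).choose u := by
  have h1 : ∑ k ∈ range n, u.choose k * v.choose k
      = ∑ k ∈ range (u + 1), u.choose k * v.choose k := by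
    symm
    apply Finset.sum_subset
    · exact Finset.range_subset_range.2 hu
    · intro x _ hx
      rw [Nat.choose_eq_zero_of_lt (by simpa using hx), zero_mul]
  rw [h1, Nat.add_choose_eq, Finset.Nat.sum_antidiagonal_eq_sum_range_succ_mk]
  conv_rhs => rw [← Finset.sum_range_reflect]
  apply Finset.sum_congr rfl
  intro k hk
  have hk' : k ≤ u := Nat.lt_succ_iff.mp (Finset.mem_range.mp hk)
  simp only [Nat.succ_sub_one, Nat.add_sub_cancel]
  rw [Nat.sub_sub_self hk', Nat.choose_symm hk']

lemma Lm_mul_Km (n : ℕ) : Lm n * Km n = 1 := by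
  ext u v
  simp only [Matrix.mul_apply, Lm, Km, Matrix.of_apply, Matrix.one_apply]
  rw [Fin.sum_univ_eq_sum_range
    (fun k => ((u : ℕ).choose k : ℤ) * ((-1) ^ (k + (v : ℕ)) * (k.choose (v : ℕ) : ℤ)))]
  have h1 : ∑ k ∈ range n, ((u : ℕ).choose k : ℤ) * ((-1) ^ (k + (v : ℕ)) * (k.choose (v : ℕ) : ℤ))
      = ∑ k ∈ range ((u : ℕ) + 1),
          ((u : ℕ).choose k : ℤ) * ((-1) ^ (k + (v : ℕ)) * (k.choose (v : ℕ) : ℤ)) := by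
    symm
    apply Finset.sum_subset
    · exact Finset.range_subset_range.2 u.isLt
    · intro x _ hx
      rw [Nat.choose_eq_zero_of_lt (by simpa using hx)]
      simp
  rw [h1]
  rcases le_or_gt (v : ℕ) (u : ℕ) with hvu | hvu
  · have h2 : ∑ k ∈ range ((u : ℕ) + 1),
        ((u : ℕ).choose k : ℤ) * ((-1) ^ (k + (v : ℕ)) * (k.choose (v : ℕ) : ℤ))
        = ∑ k ∈ Finset.Ico (v : ℕ) ((u : ℕ) + 1),
          ((u : ℕ).choose k : ℤ) * ((-1) ^ (k + (v : ℕ)) * (k.choose (v : ℕ) : ℤ)) := by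
      symm
      apply Finset.sum_subset
      · intro x hx
        simp only [Finset.mem_Ico] at hx
        exact Finset.mem_range.2 hx.2
      · intro x hx hx'
        simp only [Finset.mem_range] at hx
        simp only [Finset.mem_Ico, not_and, not_lt] at hx'
        have hxv : x < (v : ℕ) := by
          by_contra hc
          push_neg at hc
          exact absurd (hx' hc) (by omega)
        rw [Nat.choose_eq_zero_of_lt hxv]
        simp
    rw [h2, Finset.sum_Ico_eq_sum_range]
    have hlen : (u : ℕ) + 1 - (v : ℕ) = ((u : ℕ) - (v : ℕ)) + 1 := by omega
    rw [hlen]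
    have h3 : ∀ j ∈ range (((u : ℕ) - (v : ℕ)) + 1),
        ((u : ℕ).choose ((v : ℕ) + j) : ℤ) *
          ((-1) ^ ((v : ℕ) + j + (v : ℕ)) * ((((v : ℕ) + j).choose (v : ℕ)) : ℤ))
        = ((u : ℕ).choose (v : ℕ) : ℤ) * ((-1) ^ j * ((((u : ℕ) - (v : ℕ)).choose j) : ℤ)) := by
      intro j hj
      have hj' : j ≤ (u : ℕ) - (v : ℕ) := Nat.lt_succ_iff.mp (Finset.mem_range.mp hj)
      have hkn : (v : ℕ) + j ≤ (u : ℕ) := by omega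
      have hsk : (v : ℕ) ≤ (v : ℕ) + j := Nat.le_add_right _ _
      have := Nat.choose_mul (n := (u : ℕ)) hsk
      have hsub : (v : ℕ) + j - (v : ℕ) = j := by omega
      rw [hsub] at this
      have hcast : ((u : ℕ).choose ((v : ℕ) + j) : ℤ) * ((((v : ℕ) + j).choose (v : ℕ)) : ℤ)
          = ((u : ℕ).choose (v : ℕ) : ℤ) * ((((u : ℕ) - (v : ℕ)).choose j) : ℤ) := by
        exact_mod_cast congrArg (Nat.cast : ℕ → ℤ) this
      have hsign : ((-1 : ℤ)) ^ ((v : ℕ) + j + (v : ℕ)) = (-1) ^ j := by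
        have : (v : ℕ) + j + (v : ℕ) = 2 * (v : ℕ) + j := by ring
        rw [this, pow_add, pow_mul]
        simp
      rw [hsign]
      linear_combination ((-1 : ℤ)) ^ j * hcast
    rw [Finset.sum_congr rfl h3, ← Finset.mul_sum]
    rw [Int.alternating_sum_range_choose]
    by_cases huv : (u : ℕ) = (v : ℕ)
    · have : u = v := Fin.ext huv
      simp [this, huv, Nat.sub_self]
    · have : (u : ℕ) - (v : ℕ) ≠ 0 := by omega
      have huv' : u ≠ v := fun h => huv (congrArg _ h)
      simp [this, huv']
  · have hzero : ∀ k ∈ range ((u : ℕ) + 1),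
        ((u : ℕ).choose k : ℤ) * ((-1) ^ (k + (v : ℕ)) * (k.choose (v : ℕ) : ℤ)) = 0 := by
      intro k hk
      have : k < (v : ℕ) := by
        have := Finset.mem_range.mp hk; omega
      rw [Nat.choose_eq_zero_of_lt this]
      simp
    rw [Finset.sum_eq_zero hzero]
    have : u ≠ v := fun h => by simp [h] at hvu
    simp [this]

lemma M_eq_Lm_mul (n : ℕ) : M n = Lm n * (Lm n)ᵀ := by
  ext u v
  simp only [M, Lm, Matrix.mul_apply, Matrix.transpose_apply, Matrix.of_apply]
  rw [Fin.sum_univ_eq_sum_range (fun k => ((u : ℕ).choose k : ℤ) * ((v : ℕ).choose k : ℤ))]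
  rw [← vdm (u : ℕ) (v : ℕ) n u.isLt]
  push_cast
  rfl

lemma det_Lm (n : ℕ) : (Lm n).det = 1 := by
  rw [Matrix.det_of_lowerTriangular (Lm n)]
  · simp [Lm]
  · intro i j h
    simp only [OrderDual.toDual_lt_toDual] at h
    simp only [Lm, Matrix.of_apply]
    exact_mod_cast congrArg (Nat.cast : ℕ → ℤ) (Nat.choose_eq_zero_of_lt h)

lemma adjugate_Lm (n : ℕ) : (Lm n).adjugate = Km n := by
  have hinv : (Lm n)⁻¹ = Km n := Matrix.inv_eq_right_inv (Lm_mul_Km n)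
  rw [← hinv, Matrix.inv_def, det_Lm, Ring.inverse_one, one_smul]

lemma adjugate_M (n : ℕ) : (M n).adjugate = (Km n)ᵀ * Km n := by
  rw [M_eq_Lm_mul, Matrix.adjugate_mul_distrib, ← Matrix.adjugate_transpose, adjugate_Lm]

lemma sum_choose_fin (n : ℕ) (k : Fin n) :
    ∑ i : Fin n, (((k : ℕ).choose (i : ℕ)) : ℤ) = 2 ^ (k : ℕ) := by
  rw [Fin.sum_univ_eq_sum_range (fun i => (((k : ℕ).choose i) : ℤ))]
  have h1 : ∑ i ∈ range n, (((k : ℕ).choose i) : ℤ)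
      = ∑ i ∈ range ((k : ℕ) + 1), (((k : ℕ).choose i) : ℤ) := by
    symm
    apply Finset.sum_subset
    · exact Finset.range_subset_range.2 k.isLt
    · intro x _ hx
      rw [Nat.choose_eq_zero_of_lt (by simpa using hx)]
      simp
  rw [h1]
  exact_mod_cast congrArg (Nat.cast : ℕ → ℤ) (Nat.sum_range_choose (k : ℕ))

lemma minor_sum_eq (n : ℕ) :
    (∑ i : Fin (n + 1), ∑ j : Fin (n + 1),
        ((M (n + 1)).submatrix i.succAbove j.succAbove).det) =
      ∑ k : Fin (n + 1), (4 : ℤ) ^ (k : ℕ) := by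
  have hminor : ∀ i j : Fin (n + 1),
      ((M (n + 1)).submatrix i.succAbove j.succAbove).det
        = (-1) ^ ((i : ℕ) + (j : ℕ)) * (M (n + 1)).adjugate j i := by
    intro i j
    rw [Matrix.adjugate_fin_succ_eq_det_submatrix]
    rw [← mul_assoc, ← pow_add]
    have : Even ((i : ℕ) + (j : ℕ) + ((i : ℕ) + (j : ℕ))) := ⟨(i : ℕ) + (j : ℕ), by ring⟩
    rw [this.neg_one_pow, one_mul]
  calc (∑ i : Fin (n + 1), ∑ j : Fin (n + 1),
        ((M (n + 1)).submatrix i.succAbove j.succAbove).det)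
      = ∑ i : Fin (n + 1), ∑ j : Fin (n + 1), ∑ k : Fin (n + 1),
          (((k : ℕ).choose (i : ℕ)) : ℤ) * (((k : ℕ).choose (j : ℕ)) : ℤ) := by
        apply Finset.sum_congr rfl; intro i _
        apply Finset.sum_congr rfl; intro j _
        rw [hminor i j, adjugate_M, Matrix.mul_apply, Finset.mul_sum]
        apply Finset.sum_congr rfl; intro k _
        simp only [Km, Matrix.transpose_apply, Matrix.of_apply]
        have hsign : ((-1 : ℤ)) ^ ((i : ℕ) + (j : ℕ)) *
            ((-1) ^ ((k : ℕ) + (j : ℕ)) * (-1) ^ ((k : ℕ) + (i : ℕ))) = 1 := by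
          rw [← pow_add, ← pow_add]
          exact Even.neg_one_pow ⟨(i : ℕ) + (j : ℕ) + (k : ℕ), by ring⟩
        calc ((-1 : ℤ)) ^ ((i : ℕ) + (j : ℕ)) *
              ((-1) ^ ((k : ℕ) + (j : ℕ)) * (((k : ℕ).choose (j : ℕ)) : ℤ) *
               ((-1) ^ ((k : ℕ) + (i : ℕ)) * (((k : ℕ).choose (i : ℕ)) : ℤ)))
            = ((-1 : ℤ)) ^ ((i : ℕ) + (j : ℕ)) *
              ((-1) ^ ((k : ℕ) + (j : ℕ)) * (-1) ^ ((k : ℕ) + (i : ℕ))) *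
              ((((k : ℕ).choose (i : ℕ)) : ℤ) * (((k : ℕ).choose (j : ℕ)) : ℤ)) := by ring
          _ = (((k : ℕ).choose (i : ℕ)) : ℤ) * (((k : ℕ).choose (j : ℕ)) : ℤ) := by
              rw [hsign, one_mul]
    _ = ∑ k : Fin (n + 1), ∑ i : Fin (n + 1), ∑ j : Fin (n + 1),
          (((k : ℕ).choose (i : ℕ)) : ℤ) * (((k : ℕ).choose (j : ℕ)) : ℤ) := by
        rw [show (∑ i : Fin (n + 1), ∑ j : Fin (n + 1), ∑ k : Fin (n + 1),
          (((k : ℕ).choose (i : ℕ)) : ℤ) * (((k : ℕ).choose (j : ℕ)) : ℤ))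
          = ∑ i : Fin (n + 1), ∑ k : Fin (n + 1), ∑ j : Fin (n + 1),
          (((k : ℕ).choose (i : ℕ)) : ℤ) * (((k : ℕ).choose (j : ℕ)) : ℤ)
          from Finset.sum_congr rfl fun i _ => Finset.sum_comm]
        exact Finset.sum_comm
    _ = ∑ k : Fin (n + 1), (4 : ℤ) ^ (k : ℕ) := by
        apply Finset.sum_congr rfl; intro k _
        rw [← Finset.sum_mul_sum, sum_choose_fin, ← pow_add,
          show (4 : ℤ) = 2 ^ 2 by norm_num, ← pow_mul, two_mul]

/-- With `s(n) = ∑_{i,j} Δ(n)_i^j` the sum of all minors of `M(n)`, one has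
`s(n) = s(n-1) + 4^(n-1)` for all `n ≥ 2` (here the size `n` is `n+2`). -/
theorem minor_sum_step (n : ℕ) :
    (∑ i : Fin (n + 2), ∑ j : Fin (n + 2),
        ((M (n + 2)).submatrix i.succAbove j.succAbove).det) =
      (∑ i : Fin (n + 1), ∑ j : Fin (n + 1),
          ((M (n + 1)).submatrix i.succAbove j.succAbove).det) + 4 ^ (n + 1) := by
  rw [minor_sum_eq (n + 1), minor_sum_eq n, Fin.sum_univ_castSucc]
  simp
end

section
/- The number of (n−2)-tuples of pairwise nonintersecting lattice paths with unit right and up steps, where for each choice of an omitted startpoint i and omitted endpoint j from {0,…,n−2}, the k-th path runs from startpoint k+[i≤k] to endpoint k+[j≤k] (points on a staircase boundary), summed over all i, j, equals (4^{n−1}−1)/3. Equivalently (by Gessel–Viennot), Σ_{i=0}^{n−2} Σ_{j=0}^{n−2} Δ(n−1)_i^j = (4^{n−1}−1)/3, where Δ(n−1)_i^j are minors of the binomial matrix M(n−1). -/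
open Finset Matrix

/-- The lower-triangular Pascal matrix. -/
def Lp (n : ℕ) : Matrix (Fin n) (Fin n) ℤ :=
  Matrix.of fun u v => ((u : ℕ).choose (v : ℕ) : ℤ)

/-- The signed lower-triangular Pascal matrix, inverse of `Lp`. -/
def Kp (n : ℕ) : Matrix (Fin n) (Fin n) ℤ :=
  Matrix.of fun u v => (-1) ^ ((u : ℕ) + (v : ℕ)) * ((u : ℕ).choose (v : ℕ) : ℤ)

/-- Extending the choose sum beyond `k` adds nothing. -/
lemma sum_fin_choose {n k : ℕ} (hk : k < n) (f : ℕ → ℤ) :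
    ∑ i : Fin n, (k.choose (i : ℕ) : ℤ) * f (i : ℕ)
      = ∑ i ∈ range (k + 1), (k.choose i : ℤ) * f i := by
  rw [Fin.sum_univ_eq_sum_range (fun i => (k.choose i : ℤ) * f i) n]
  symm
  apply Finset.sum_subset
  · intro x hx
    simp only [mem_range] at hx ⊢
    omega
  · intro x _ hx
    simp only [mem_range, not_lt] at hx
    rw [Nat.choose_eq_zero_of_lt hx]
    simp

lemma M_eq (n : ℕ) : M n = Lp n * (Lp n)ᵀ := by
  ext u v
  simp only [M, Lp, Matrix.mul_apply, transpose_apply, of_apply]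
  have hv : (((u : ℕ) + (v : ℕ)).choose (u : ℕ) : ℤ)
      = (((v : ℕ) + (u : ℕ)).choose (u : ℕ) : ℤ) := by rw [Nat.add_comm]
  rw [hv, Nat.add_choose_eq]
  rw [Finset.Nat.sum_antidiagonal_eq_sum_range_succ (fun a b => (v : ℕ).choose a * (u : ℕ).choose b)]
  push_cast
  have : ∀ k ∈ range ((u : ℕ) + 1),
      ((v : ℕ).choose k : ℤ) * ((u : ℕ).choose ((u : ℕ) - k) : ℤ)
        = ((u : ℕ).choose k : ℤ) * ((v : ℕ).choose k : ℤ) := by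
    intro k hk
    rw [mem_range] at hk
    rw [Nat.choose_symm (by omega)]
    ring
  rw [Finset.sum_congr rfl this]
  rw [← sum_fin_choose u.isLt (fun k => ((v : ℕ).choose k : ℤ))]

lemma Lp_mul_Kp (n : ℕ) : Lp n * Kp n = 1 := by
  ext i k
  simp only [Lp, Kp, Matrix.mul_apply, of_apply, Matrix.one_apply]
  have key : ∑ j : Fin n, ((i : ℕ).choose (j : ℕ) : ℤ) *
      ((-1) ^ ((j : ℕ) + (k : ℕ)) * ((j : ℕ).choose (k : ℕ) : ℤ))
      = ∑ j ∈ range ((i : ℕ) + 1),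
        ((i : ℕ).choose j : ℤ) * ((-1) ^ (j + (k : ℕ)) * ((j).choose (k : ℕ) : ℤ)) :=
    sum_fin_choose i.isLt (fun j => (-1) ^ (j + (k : ℕ)) * ((j).choose (k : ℕ) : ℤ))
  rw [key]
  by_cases hik : (k : ℕ) ≤ (i : ℕ)
  · have hsub : Finset.Ico (k : ℕ) ((i : ℕ) + 1) ⊆ range ((i : ℕ) + 1) := by
      intro x hx; simp only [mem_Ico, mem_range] at hx ⊢; omega
    rw [← Finset.sum_subset hsub]
    · rw [Finset.sum_Ico_eq_sum_range]
      have step : ∀ m ∈ range ((i : ℕ) + 1 - (k : ℕ)),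
          ((i : ℕ).choose ((k : ℕ) + m) : ℤ) *
            ((-1) ^ ((k : ℕ) + m + (k : ℕ)) * (((k : ℕ) + m).choose (k : ℕ) : ℤ))
          = ((i : ℕ).choose (k : ℕ) : ℤ) *
              ((-1) ^ m * (((i : ℕ) - (k : ℕ)).choose m : ℤ)) := by
        intro m hm
        rw [mem_range] at hm
        have h1 : (k : ℕ) + m ≤ (i : ℕ) := by omega
        have h2 : (k : ℕ) ≤ (k : ℕ) + m := by omega
        have hmul := Nat.choose_mul (n := (i : ℕ)) h2
        have hsign : ((-1 : ℤ)) ^ ((k : ℕ) + m + (k : ℕ)) = (-1) ^ m := by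
          have : (k : ℕ) + m + (k : ℕ) = 2 * (k : ℕ) + m := by omega
          rw [this, pow_add, pow_mul]
          simp
        rw [hsign]
        have : ((i : ℕ).choose ((k : ℕ) + m) : ℤ) * (((k : ℕ) + m).choose (k : ℕ) : ℤ)
            = ((i : ℕ).choose (k : ℕ) : ℤ) * (((i : ℕ) - (k : ℕ)).choose ((k : ℕ) + m - (k : ℕ)) : ℤ) := by
          exact_mod_cast hmul
        have hcancel : (k : ℕ) + m - (k : ℕ) = m := by omega
        rw [hcancel] at this
        calc ((i : ℕ).choose ((k : ℕ) + m) : ℤ) * ((-1) ^ m * (((k : ℕ) + m).choose (k : ℕ) : ℤ))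
            = (-1) ^ m * (((i : ℕ).choose ((k : ℕ) + m) : ℤ) * (((k : ℕ) + m).choose (k : ℕ) : ℤ)) := by ring
          _ = (-1) ^ m * (((i : ℕ).choose (k : ℕ) : ℤ) * (((i : ℕ) - (k : ℕ)).choose m : ℤ)) := by rw [this]
          _ = _ := by ring
      rw [Finset.sum_congr rfl step, ← Finset.mul_sum]
      have hrange : (i : ℕ) + 1 - (k : ℕ) = ((i : ℕ) - (k : ℕ)) + 1 := by omega
      rw [hrange, Int.alternating_sum_range_choose]
      by_cases h : i = k
      · subst h
        simp [Nat.sub_self]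
      · have hne : (i : ℕ) - (k : ℕ) ≠ 0 := by
          have : (i : ℕ) ≠ (k : ℕ) := fun hc => h (Fin.ext hc)
          omega
        rw [if_neg hne, if_neg h]
        ring
    · intro x hx hx'
      simp only [mem_range, mem_Ico, not_and, not_le, not_lt] at hx hx'
      have : x < (k : ℕ) := by omega
      rw [Nat.choose_eq_zero_of_lt this]
      simp
  · have hik' : (i : ℕ) < (k : ℕ) := by omega
    have hne : i ≠ k := by intro h; rw [h] at hik'; omega
    rw [if_neg hne]
    apply Finset.sum_eq_zero
    intro j hj
    rw [mem_range] at hj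
    have : j < (k : ℕ) := by omega
    rw [Nat.choose_eq_zero_of_lt this]
    simp

lemma det_Lp (n : ℕ) : (Lp n).det = 1 := by
  rw [Matrix.det_of_lowerTriangular (Lp n)]
  · simp [Lp]
  · intro i j h
    simp only [Lp, of_apply]
    rw [Nat.choose_eq_zero_of_lt]
    · simp
    · exact h

lemma adj_Lp (n : ℕ) : (Lp n).adjugate = Kp n := by
  have h1 : Lp n * (Lp n).adjugate = 1 := by
    rw [Matrix.mul_adjugate, det_Lp]; simp
  have h2 : Kp n * Lp n = 1 := mul_eq_one_comm.mp (Lp_mul_Kp n)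
  calc (Lp n).adjugate = 1 * (Lp n).adjugate := by rw [Matrix.one_mul]
    _ = Kp n * (Lp n * (Lp n).adjugate) := by rw [← h2, Matrix.mul_assoc]
    _ = Kp n := by rw [h1, Matrix.mul_one]

lemma adj_M (n : ℕ) : (M n).adjugate = (Kp n)ᵀ * Kp n := by
  rw [M_eq, Matrix.adjugate_mul_distrib, ← Matrix.adjugate_transpose, adj_Lp]

lemma minor_eq (n : ℕ) (i j : Fin (n + 1)) :
    ((M (n + 1)).submatrix i.succAbove j.succAbove).det
      = ∑ k : Fin (n + 1), ((k : ℕ).choose (i : ℕ) : ℤ) * ((k : ℕ).choose (j : ℕ) : ℤ) := by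
  have h := Matrix.adjugate_fin_succ_eq_det_submatrix (M (n + 1)) j i
  rw [adj_M] at h
  have hsq : ((-1 : ℤ)) ^ ((i : ℕ) + (j : ℕ)) * (-1) ^ ((i : ℕ) + (j : ℕ)) = 1 := by
    rw [← pow_add, ← two_mul, pow_mul]; simp
  have : ((M (n + 1)).submatrix i.succAbove j.succAbove).det
      = (-1) ^ ((i : ℕ) + (j : ℕ)) * (((Kp (n+1))ᵀ * Kp (n+1)) j i) := by
    rw [h, ← mul_assoc, hsq, one_mul]
  rw [this]
  simp only [Matrix.mul_apply, Matrix.transpose_apply, Kp, of_apply]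
  rw [Finset.mul_sum]
  apply Finset.sum_congr rfl
  intro k _
  have hexp : ((-1 : ℤ)) ^ ((i : ℕ) + (j : ℕ)) * (-1) ^ ((k : ℕ) + (j : ℕ)) *
      (-1) ^ ((k : ℕ) + (i : ℕ)) = 1 := by
    rw [← pow_add, ← pow_add,
      show (i : ℕ) + (j : ℕ) + ((k : ℕ) + (j : ℕ)) + ((k : ℕ) + (i : ℕ))
        = 2 * ((i : ℕ) + (j : ℕ) + (k : ℕ)) from by ring, pow_mul]
    norm_num
  calc ((-1 : ℤ)) ^ ((i : ℕ) + (j : ℕ)) * ((-1) ^ ((k : ℕ) + (j : ℕ)) * ((k : ℕ).choose (j : ℕ) : ℤ) *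
      ((-1) ^ ((k : ℕ) + (i : ℕ)) * ((k : ℕ).choose (i : ℕ) : ℤ)))
      = ((-1 : ℤ)) ^ ((i : ℕ) + (j : ℕ)) * (-1) ^ ((k : ℕ) + (j : ℕ)) * (-1) ^ ((k : ℕ) + (i : ℕ)) *
        (((k : ℕ).choose (i : ℕ) : ℤ) * ((k : ℕ).choose (j : ℕ) : ℤ)) := by ring
    _ = ((k : ℕ).choose (i : ℕ) : ℤ) * ((k : ℕ).choose (j : ℕ) : ℤ) := by rw [hexp, one_mul]

lemma row_sum_choose {n : ℕ} (k : Fin (n + 1)) :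
    ∑ i : Fin (n + 1), (((k : ℕ)).choose (i : ℕ) : ℤ) = 2 ^ (k : ℕ) := by
  have := sum_fin_choose (n := n + 1) (k := (k : ℕ)) k.isLt (fun _ => (1 : ℤ))
  simp only [mul_one] at this
  rw [this]
  rw [← Nat.cast_sum, Nat.sum_range_choose]
  push_cast
  ring

/-- By Gessel–Viennot, the total number of the relevant tuples of nonintersecting
lattice paths is `∑_{i,j} Δ(n-1)_i^j = (4^(n-1) - 1)/3` (here the original `n` is `n+2`,
so `M(n-1)` is `M(n+1)` and indices range over `{0,…,n}`). -/
theorem gessel_viennot_minor_sum (n : ℕ) :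
    ∑ i : Fin (n + 1), ∑ j : Fin (n + 1),
        ((M (n + 1)).submatrix i.succAbove j.succAbove).det =
      (4 ^ (n + 1) - 1) / 3 := by
  have hsum : ∑ i : Fin (n + 1), ∑ j : Fin (n + 1),
      ((M (n + 1)).submatrix i.succAbove j.succAbove).det
      = ∑ k : Fin (n + 1), (4 : ℤ) ^ (k : ℕ) := by
    simp_rw [minor_eq]
    have swap1 : ∀ i : Fin (n + 1), ∑ j : Fin (n + 1), ∑ k : Fin (n + 1),
        ((k : ℕ).choose (i : ℕ) : ℤ) * ((k : ℕ).choose (j : ℕ) : ℤ)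
        = ∑ k : Fin (n + 1), ∑ j : Fin (n + 1),
          ((k : ℕ).choose (i : ℕ) : ℤ) * ((k : ℕ).choose (j : ℕ) : ℤ) := fun i =>
      Finset.sum_comm
    simp_rw [swap1]
    rw [Finset.sum_comm]
    apply Finset.sum_congr rfl
    intro k _
    have : ∑ i : Fin (n + 1), ∑ j : Fin (n + 1),
        ((k : ℕ).choose (i : ℕ) : ℤ) * ((k : ℕ).choose (j : ℕ) : ℤ)
        = (∑ i : Fin (n + 1), ((k : ℕ).choose (i : ℕ) : ℤ)) *
          (∑ j : Fin (n + 1), ((k : ℕ).choose (j : ℕ) : ℤ)) := by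
      rw [Finset.sum_mul_sum]
    rw [this, row_sum_choose, ← pow_add, ← two_mul, pow_mul]
    norm_num
  rw [hsum, Fin.sum_univ_eq_sum_range]
  have hgeom : (∑ k ∈ range (n + 1), (4 : ℤ) ^ k) * (4 - 1) = 4 ^ (n + 1) - 1 :=
    geom_sum_mul 4 (n + 1)
  have h3 : (4 : ℤ) ^ (n + 1) - 1 = 3 * ∑ k ∈ range (n + 1), (4 : ℤ) ^ k := by
    rw [← hgeom]; ring
  rw [h3, Int.mul_ediv_cancel_left _ (by norm_num)]
end
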